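/- The complex line integral of v/√(1 − v⁶) along the straight segment from 1 to w converges to −∫₀¹ x/√(1 − x⁶) dx as w → 0 inside the unit disk: for w ∈ ℂ with |w| < 1 define F(w) := ∫₀¹ (w − 1) · γ_w(t) · (1 − γ_w(t)⁶)^(−1/2) dt, where γ_w(t) := 1 + t·(w − 1) and z^(−1/2) denotes the principal complex power Complex.cpow z (−1/2). Then F(w) tends to −∫₀¹ x/√(1 − x⁶) dx as w → 0 within the open unit disk. -/

import Mathlib

open Complex

/-- The straight segment from 1 to w: γ_w(t) = 1 + t·(w − 1). -/
noncomputable def gammaPath (w : ℂ) (t : ℝ) : ℂ := 1 + (t : ℂ) * (w - 1)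

/-- The complex line integral of v/√(1 − v⁶) along the straight segment from 1 to w,
using the principal complex power for the square root. -/
noncomputable def segInt (w : ℂ) : ℂ :=
  ∫ t in (0 : ℝ)..1, (w - 1) * gammaPath w t * (1 - gammaPath w t ^ 6) ^ (-(1 / 2) : ℂ)

lemma gamma_norm_le {w : ℂ} {t : ℝ} (hw : ‖w‖ ≤ 1/2) (ht : t ∈ Set.Icc (0:ℝ) 1) :
    ‖gammaPath w t‖ ≤ 1 - t/2 := by
  have h1 : gammaPath w t = ((1 - t : ℝ) : ℂ) + (t:ℂ) * w := by
    unfold gammaPath; push_cast; ring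
  rw [h1]
  calc ‖((1 - t : ℝ) : ℂ) + (t:ℂ) * w‖ ≤ ‖((1 - t : ℝ) : ℂ)‖ + ‖(t:ℂ) * w‖ := norm_add_le _ _
    _ = |1 - t| + |t| * ‖w‖ := by
        rw [Complex.norm_real, norm_mul, Complex.norm_real, Real.norm_eq_abs, Real.norm_eq_abs]
    _ ≤ (1 - t) + t * (1/2) := by
        rw [_root_.abs_of_nonneg (by linarith [ht.2] : (0:ℝ) ≤ 1 - t), _root_.abs_of_nonneg ht.1]
        nlinarith [ht.1, ht.2]
    _ ≤ 1 - t/2 := by linarith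

lemma re_lower {w : ℂ} {t : ℝ} (hw : ‖w‖ ≤ 1/2) (ht : t ∈ Set.Icc (0:ℝ) 1) :
    t/2 ≤ (1 - gammaPath w t ^ 6).re := by
  have h6 : ‖gammaPath w t ^ 6‖ ≤ 1 - t/2 := by
    rw [norm_pow]
    calc ‖gammaPath w t‖ ^ 6 ≤ (1 - t/2) ^ 6 :=
          pow_le_pow_left₀ (norm_nonneg _) (gamma_norm_le hw ht) 6
      _ ≤ (1 - t/2) ^ 1 := pow_le_pow_of_le_one (by linarith [ht.2]) (by linarith [ht.1]) (by norm_num)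
      _ = 1 - t/2 := pow_one _
  have hre : (gammaPath w t ^ 6).re ≤ 1 - t/2 :=
    le_trans (Complex.re_le_norm _) h6
  simp only [Complex.sub_re, Complex.one_re]
  linarith

lemma norm_lower {w : ℂ} {t : ℝ} (hw : ‖w‖ ≤ 1/2) (ht : t ∈ Set.Icc (0:ℝ) 1) :
    t/2 ≤ ‖1 - gammaPath w t ^ 6‖ :=
  le_trans (re_lower hw ht) (le_trans (Complex.re_le_norm _) le_rfl)

lemma cpow_norm_le {w : ℂ} {t : ℝ} (hw : ‖w‖ ≤ 1/2) (ht : t ∈ Set.Ioc (0:ℝ) 1) :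
    ‖(1 - gammaPath w t ^ 6) ^ (-(1 / 2) : ℂ)‖ ≤ (t/2) ^ (-(1/2) : ℝ) := by
  have h1 : ‖(1 - gammaPath w t ^ 6) ^ (-(1 / 2) : ℂ)‖ ≤ ‖1 - gammaPath w t ^ 6‖ ^ (-(1/2) : ℝ) := by
    have := Complex.norm_cpow_le (1 - gammaPath w t ^ 6) (-(1 / 2) : ℂ)
    simpa using this
  refine h1.trans ?_
  exact Real.rpow_le_rpow_of_nonpos (by linarith [ht.1]) (norm_lower hw ⟨ht.1.le, ht.2⟩) (by norm_num)

lemma limit_fun_eq (t : ℝ) (ht : t ∈ Set.uIcc (0:ℝ) 1) :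
    ((0:ℂ) - 1) * gammaPath 0 t * (1 - gammaPath 0 t ^ 6) ^ (-(1 / 2) : ℂ)
      = ((-( (1 - t) / Real.sqrt (1 - (1-t)^6) ) : ℝ) : ℂ) := by
  rw [Set.uIcc_of_le zero_le_one] at ht
  have hγ : gammaPath 0 t = ((1 - t : ℝ) : ℂ) := by unfold gammaPath; push_cast; ring
  have hr : (0:ℝ) ≤ 1 - (1-t)^6 := by nlinarith [ht.1, ht.2, pow_le_one₀ (by linarith [ht.2] : (0:ℝ) ≤ 1 - t) (by linarith [ht.1] : (1:ℝ) - t ≤ 1) (n := 6)]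
  have hbase : (1 : ℂ) - gammaPath 0 t ^ 6 = (((1 - (1-t)^6 : ℝ)) : ℂ) := by
    rw [hγ]; push_cast; ring
  rw [hbase]
  have hcast : ((1 - (1-t)^6 : ℝ) : ℂ) ^ (-(1 / 2) : ℂ)
      = (((1 - (1-t)^6) ^ (-(1/2) : ℝ) : ℝ) : ℂ) := by
    rw [Complex.ofReal_cpow hr]
    norm_num
  rw [hcast, hγ]
  have hrpow : (1 - (1-t)^6 : ℝ) ^ (-(1/2) : ℝ) = (Real.sqrt (1 - (1-t)^6))⁻¹ := by
    rw [Real.rpow_neg hr, Real.sqrt_eq_rpow]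
  rw [hrpow]
  push_cast
  field_simp
  ring

/-- As w → 0 inside the open unit disk, the line integral of v/√(1 − v⁶) along the
segment from 1 to w tends to −∫₀¹ x/√(1 − x⁶) dx. -/
theorem segInt_tendsto :
    Filter.Tendsto segInt (nhdsWithin 0 (Metric.ball (0 : ℂ) 1))
      (nhds (-((∫ x in Set.Ioo (0 : ℝ) 1, x / Real.sqrt (1 - x ^ 6) : ℝ) : ℂ))) := by
  set l := nhdsWithin (0:ℂ) (Metric.ball (0 : ℂ) 1)
  have hmem : {w : ℂ | ‖w‖ ≤ 1/2} ∈ l := by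
    apply nhdsWithin_le_nhds
    have : Metric.closedBall (0:ℂ) (1/2) ∈ nhds (0:ℂ) := Metric.closedBall_mem_nhds _ (by norm_num)
    refine Filter.mem_of_superset this ?_
    intro w hw
    simpa [Metric.mem_closedBall, dist_eq_norm] using hw
  have key : Filter.Tendsto segInt l
      (nhds (∫ t in (0:ℝ)..1,
        ((0:ℂ) - 1) * gammaPath 0 t * (1 - gammaPath 0 t ^ 6) ^ (-(1 / 2) : ℂ))) := by
    apply intervalIntegral.tendsto_integral_filter_of_dominated_convergence
      (bound := fun t => 3 * t ^ (-(1/2) : ℝ))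
    · -- measurability
      filter_upwards [hmem] with w hw
      rw [Set.uIoc_of_le zero_le_one]
      apply ContinuousOn.aestronglyMeasurable _ measurableSet_Ioc
      intro t ht
      apply ContinuousWithinAt.mul
      · exact (Continuous.continuousWithinAt (by unfold gammaPath; continuity))
      · apply ContinuousWithinAt.cpow _ continuousWithinAt_const
        · rw [Complex.mem_slitPlane_iff]
          left
          exact lt_of_lt_of_le (by linarith [ht.1] : (0:ℝ) < t/2) (re_lower hw ⟨ht.1.le, ht.2⟩)
        · exact Continuous.continuousWithinAt (by unfold gammaPath; continuity)
    · -- bound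
      filter_upwards [hmem] with w hw
      apply MeasureTheory.ae_of_all
      intro t ht
      rw [Set.uIoc_of_le zero_le_one] at ht
      have h1 : ‖w - 1‖ ≤ 3/2 := by
        calc ‖w - 1‖ ≤ ‖w‖ + ‖(1:ℂ)‖ := norm_sub_le _ _
          _ ≤ 1/2 + 1 := by rw [norm_one]; exact add_le_add_left hw 1
          _ = 3/2 := by norm_num
      have h2 : ‖gammaPath w t‖ ≤ 1 := le_trans (gamma_norm_le hw ⟨ht.1.le, ht.2⟩) (by linarith [ht.1])
      have h3 := cpow_norm_le hw ht
      have htpos : (0:ℝ) < t := ht.1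
      have hhalf : (t/2) ^ (-(1/2) : ℝ) = t ^ (-(1/2):ℝ) * (2:ℝ) ^ ((1/2):ℝ) := by
        rw [div_eq_mul_inv, Real.mul_rpow htpos.le (by norm_num)]
        rw [Real.rpow_neg (by norm_num : (0:ℝ) ≤ 2⁻¹), Real.inv_rpow (by norm_num : (0:ℝ) ≤ 2),
          inv_inv]
      have h2le : (2:ℝ) ^ ((1/2):ℝ) ≤ 2 := by
        calc (2:ℝ) ^ ((1/2):ℝ) ≤ (2:ℝ) ^ ((1:ℝ)) :=
              Real.rpow_le_rpow_of_exponent_le one_le_two (by norm_num)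
          _ = 2 := Real.rpow_one 2
      calc ‖(w - 1) * gammaPath w t * (1 - gammaPath w t ^ 6) ^ (-(1 / 2) : ℂ)‖
          = ‖w - 1‖ * ‖gammaPath w t‖ * ‖(1 - gammaPath w t ^ 6) ^ (-(1 / 2) : ℂ)‖ := by
            rw [norm_mul, norm_mul]
        _ ≤ (3/2) * 1 * ((t/2) ^ (-(1/2) : ℝ)) := by
            gcongr
        _ = (3/2) * (t ^ (-(1/2):ℝ) * (2:ℝ) ^ ((1/2):ℝ)) := by rw [hhalf]; ring
        _ ≤ 3 * t ^ (-(1/2) : ℝ) := by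
            nlinarith [Real.rpow_nonneg htpos.le (-(1/2):ℝ), h2le,
              Real.rpow_nonneg (by norm_num : (0:ℝ) ≤ 2) ((1/2):ℝ)]
    · -- bound integrable
      exact (intervalIntegral.intervalIntegrable_rpow' (by norm_num)).const_mul 3
    · -- pointwise limit
      apply MeasureTheory.ae_of_all
      intro t ht
      rw [Set.uIoc_of_le zero_le_one] at ht
      have hcont : ContinuousAt (fun w : ℂ =>
          (w - 1) * gammaPath w t * (1 - gammaPath w t ^ 6) ^ (-(1 / 2) : ℂ)) 0 := by
        apply ContinuousAt.mul
        · exact Continuous.continuousAt (by unfold gammaPath; continuity)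
        · apply ContinuousAt.cpow _ continuousAt_const
          · rw [Complex.mem_slitPlane_iff]
            left
            exact lt_of_lt_of_le (by linarith [ht.1] : (0:ℝ) < t/2)
              (re_lower (by norm_num) ⟨ht.1.le, ht.2⟩)
          · exact Continuous.continuousAt (by unfold gammaPath; continuity)
      exact hcont.tendsto.mono_left nhdsWithin_le_nhds
  have heq : (∫ t in (0:ℝ)..1,
      ((0:ℂ) - 1) * gammaPath 0 t * (1 - gammaPath 0 t ^ 6) ^ (-(1 / 2) : ℂ))
      = -((∫ x in Set.Ioo (0 : ℝ) 1, x / Real.sqrt (1 - x ^ 6) : ℝ) : ℂ) := by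
    rw [intervalIntegral.integral_congr limit_fun_eq, intervalIntegral.integral_ofReal]
    have hsub : (∫ t in (0:ℝ)..1, -((1 - t) / Real.sqrt (1 - (1-t)^6)))
        = -(∫ x in (0:ℝ)..1, x / Real.sqrt (1 - x^6)) := by
      rw [intervalIntegral.integral_neg]
      congr 1
      have := intervalIntegral.integral_comp_sub_left
        (f := fun x : ℝ => x / Real.sqrt (1 - x^6)) (a := (0:ℝ)) (b := 1) 1
      simpa using this
    rw [hsub]
    have hIoo : (∫ x in (0:ℝ)..1, x / Real.sqrt (1 - x^6))
        = ∫ x in Set.Ioo (0 : ℝ) 1, x / Real.sqrt (1 - x ^ 6) := by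
      rw [intervalIntegral.integral_of_le zero_le_one, MeasureTheory.integral_Ioc_eq_integral_Ioo]
    rw [hIoo]
    push_cast
    ring
  rw [heq] at key
  exact key
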